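/- Let X, Y ≥ 1 be independent random variables such that ln X is regularly varying at zero with exponent α₁ and ln Y is regularly varying at zero with exponent α₂. Then XY − 1 is regularly varying at zero with exponent α₁ + α₂. -/

import Mathlib

open MeasureTheory ProbabilityTheory Filter

noncomputable section

/-- A random variable `X` is regularly varying at zero with exponent `α`:
`lim_{t↓0} P(X ≤ tx)/P(X ≤ t) = x^α` for all `x > 0`. -/
def RegVarZero {Ω : Type*} [MeasurableSpace Ω] (μ : Measure Ω) (X : Ω → ℝ) (α : ℝ) : Prop :=
  ∀ x : ℝ, 0 < x →
    Tendsto (fun t : ℝ => (μ {ω | X ω ≤ t * x}).toReal / (μ {ω | X ω ≤ t}).toReal)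
      (nhdsWithin 0 (Set.Ioi 0)) (nhds (x ^ α))

end

section Aux

open Set

private lemma tendsto_mul_pos_nhdsWithin {c : ℝ} (hc : 0 < c) :
    Tendsto (fun t : ℝ => t * c) (nhdsWithin 0 (Set.Ioi 0)) (nhdsWithin 0 (Set.Ioi 0)) := by
  apply tendsto_nhdsWithin_of_tendsto_nhds_of_eventually_within
  · have : Tendsto (fun t : ℝ => t * c) (nhdsWithin 0 (Set.Ioi 0)) (nhds (0 * c)) :=
      (tendsto_id.mul_const c).mono_left nhdsWithin_le_nhds
    simpa using this
  · filter_upwards [self_mem_nhdsWithin] with t ht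
    exact mul_pos ht hc

private lemma rv_zero_facts {F : ℝ → ℝ} {α : ℝ} (hα : 0 < α) (hmono : Monotone F)
    (hnn : ∀ t, 0 ≤ F t)
    (hF : ∀ x : ℝ, 0 < x → Tendsto (fun t => F (t*x) / F t)
      (nhdsWithin 0 (Set.Ioi 0)) (nhds (x ^ α))) :
    Tendsto F (nhdsWithin 0 (Set.Ioi 0)) (nhds 0) ∧ F 0 = 0 ∧ ∀ t, 0 < t → 0 < F t := by
  have hne : (nhdsWithin (0:ℝ) (Set.Ioi 0)).NeBot := by infer_instance
  -- limit from the right exists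
  set L := sInf (F '' Set.Ioi 0) with hLdef
  have hL : Tendsto F (nhdsWithin 0 (Set.Ioi 0)) (nhds L) := hmono.tendsto_nhdsGT 0
  have hLnn : 0 ≤ L := le_csInf (Set.Nonempty.image _ ⟨1, by norm_num⟩)
    (by rintro y ⟨t, -, rfl⟩; exact hnn t)
  have hL0 : L = 0 := by
    by_contra h
    have hLpos : 0 < L := lt_of_le_of_ne hLnn (Ne.symm h)
    have h2 : Tendsto (fun t : ℝ => F (t*2)) (nhdsWithin 0 (Set.Ioi 0)) (nhds L) :=
      hL.comp (tendsto_mul_pos_nhdsWithin two_pos)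
    have hdiv : Tendsto (fun t : ℝ => F (t*2) / F t) (nhdsWithin 0 (Set.Ioi 0)) (nhds (L / L)) :=
      h2.div hL (ne_of_gt hLpos)
    have := tendsto_nhds_unique hdiv (hF 2 two_pos)
    rw [div_self (ne_of_gt hLpos)] at this
    have h2a : (1:ℝ) < 2 ^ α := Real.one_lt_rpow_iff_of_pos two_pos |>.mpr (Or.inl ⟨one_lt_two, hα⟩)
    linarith
  rw [hL0] at hL
  have hF0 : F 0 = 0 := by
    have h1 : F 0 ≤ 0 := by
      refine ge_of_tendsto hL ?_
      filter_upwards [self_mem_nhdsWithin] with t ht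
      exact hmono (le_of_lt ht)
    exact le_antisymm h1 (hnn 0)
  refine ⟨hL, hF0, ?_⟩
  intro t₀ ht₀
  by_contra h
  have hFt₀ : F t₀ = 0 := le_antisymm (not_lt.mp h) (hnn t₀)
  have hev : ∀ᶠ t in nhdsWithin (0:ℝ) (Set.Ioi 0), F (t*2) / F t = 0 := by
    filter_upwards [Ioc_mem_nhdsGT_of_mem ⟨le_refl (0:ℝ), half_pos ht₀⟩] with t ht
    have h2t : F (t*2) = 0 := by
      refine le_antisymm ?_ (hnn _)
      calc F (t*2) ≤ F t₀ := hmono (by nlinarith [ht.1, ht.2])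
      _ = 0 := hFt₀
    simp [h2t]
  have : Tendsto (fun t : ℝ => F (t*2) / F t) (nhdsWithin 0 (Set.Ioi 0)) (nhds 0) :=
    Tendsto.congr' (hev.mono fun t h => h.symm) tendsto_const_nhds
  have h0 := tendsto_nhds_unique this (hF 2 two_pos)
  have : (0:ℝ) < 2 ^ α := Real.rpow_pos_of_pos two_pos α
  linarith


private lemma rv_ext {F : ℝ → ℝ} {α : ℝ} (hα : 0 < α) (hF0 : F 0 = 0)
    (hF : ∀ x : ℝ, 0 < x → Tendsto (fun t => F (t*x) / F t)
      (nhdsWithin 0 (Set.Ioi 0)) (nhds (x ^ α)))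
    {x : ℝ} (hx : 0 ≤ x) :
    Tendsto (fun t => F (t*x) / F t) (nhdsWithin 0 (Set.Ioi 0)) (nhds (x ^ α)) := by
  rcases hx.lt_or_eq with h | h
  · exact hF x h
  · have : (fun t : ℝ => F (t*x) / F t) = fun _ => 0 := by
      funext t; rw [← h]; simp [hF0]
    rw [this, ← h, Real.zero_rpow (ne_of_gt hα)]
    exact tendsto_const_nhds

private lemma core {F G H : ℝ → ℝ} {α₁ α₂ : ℝ} (hα₁ : 0 < α₁) (hα₂ : 0 < α₂)
    (hFmono : Monotone F) (hGmono : Monotone G)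
    (hFnn : ∀ t, 0 ≤ F t) (hGnn : ∀ t, 0 ≤ G t) (hHnn : ∀ t, 0 ≤ H t)
    (hF : ∀ x : ℝ, 0 < x → Tendsto (fun t => F (t*x) / F t)
      (nhdsWithin 0 (Set.Ioi 0)) (nhds (x ^ α₁)))
    (hG : ∀ x : ℝ, 0 < x → Tendsto (fun t => G (t*x) / G t)
      (nhdsWithin 0 (Set.Ioi 0)) (nhds (x ^ α₂)))
    (hlow2 : ∀ t, 0 < t → F (t * (1/2)) * G (t * (1/2)) ≤ H t)
    (hup : ∀ t, 0 < t → ∀ n : ℕ, 0 < n →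
      H t ≤ ∑ i ∈ Finset.range n,
        (F (t * (((i:ℝ)+1)/n)) - F (t * ((i:ℝ)/n))) * G (t * (1 - (i:ℝ)/n)))
    (hlow : ∀ t, 0 < t → ∀ n : ℕ, 0 < n →
      ∑ i ∈ Finset.range n,
        (F (t * (((i:ℝ)+1)/n)) - F (t * ((i:ℝ)/n))) * G (t * (1 - ((i:ℝ)+1)/n)) ≤ H t) :
    ∀ x : ℝ, 0 < x → Tendsto (fun t => H (t*x) / H t)
      (nhdsWithin 0 (Set.Ioi 0)) (nhds (x ^ (α₁+α₂))) := by
  obtain ⟨hFlim, hF0, hFpos⟩ := rv_zero_facts hα₁ hFmono hFnn hF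
  obtain ⟨hGlim, hG0, hGpos⟩ := rv_zero_facts hα₂ hGmono hGnn hG
  have hHpos : ∀ t, 0 < t → 0 < H t := fun t ht =>
    lt_of_lt_of_le (mul_pos (hFpos _ (by linarith)) (hGpos _ (by linarith))) (hlow2 t ht)
  set R : ℝ → ℝ := fun t => H t / (F t * G t) with hRdef
  -- upper and lower Riemann sums
  set u : ℕ → ℝ := fun n => ∑ i ∈ Finset.range n,
      ((((i:ℝ)+1)/n) ^ α₁ - ((i:ℝ)/n) ^ α₁) * (1 - (i:ℝ)/n) ^ α₂ with hudef
  set l : ℕ → ℝ := fun n => ∑ i ∈ Finset.range n,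
      ((((i:ℝ)+1)/n) ^ α₁ - ((i:ℝ)/n) ^ α₁) * (1 - ((i:ℝ)+1)/n) ^ α₂ with hldef
  -- the time-dependent normalized sums
  set Su : ℕ → ℝ → ℝ := fun n t => ∑ i ∈ Finset.range n,
      (F (t * (((i:ℝ)+1)/n)) / F t - F (t * ((i:ℝ)/n)) / F t) * (G (t * (1 - (i:ℝ)/n)) / G t)
    with hSudef
  set Sl : ℕ → ℝ → ℝ := fun n t => ∑ i ∈ Finset.range n,
      (F (t * (((i:ℝ)+1)/n)) / F t - F (t * ((i:ℝ)/n)) / F t) * (G (t * (1 - ((i:ℝ)+1)/n)) / G t)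
    with hSldef
  have hSu : ∀ n : ℕ, 0 < n → Tendsto (Su n) (nhdsWithin 0 (Set.Ioi 0)) (nhds (u n)) := by
    intro n hn
    apply tendsto_finset_sum
    intro i hi
    have hin : (i:ℝ) < n := by exact_mod_cast Finset.mem_range.mp hi
    have hn' : (0:ℝ) < n := by exact_mod_cast hn
    refine Tendsto.mul (Tendsto.sub ?_ ?_) ?_
    · exact rv_ext hα₁ hF0 hF (by positivity)
    · exact rv_ext hα₁ hF0 hF (by positivity)
    · exact rv_ext hα₂ hG0 hG (by rw [sub_nonneg]; exact (div_le_one hn').mpr hin.le)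
  have hSl : ∀ n : ℕ, 0 < n → Tendsto (Sl n) (nhdsWithin 0 (Set.Ioi 0)) (nhds (l n)) := by
    intro n hn
    apply tendsto_finset_sum
    intro i hi
    have hin : (i:ℝ) + 1 ≤ n := by
      have := Finset.mem_range.mp hi; exact_mod_cast Nat.succ_le_of_lt this
    have hn' : (0:ℝ) < n := by exact_mod_cast hn
    refine Tendsto.mul (Tendsto.sub ?_ ?_) ?_
    · exact rv_ext hα₁ hF0 hF (by positivity)
    · exact rv_ext hα₁ hF0 hF (by positivity)
    · exact rv_ext hα₂ hG0 hG (by rw [sub_nonneg]; exact (div_le_one hn').mpr hin)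
  have hRle : ∀ n : ℕ, 0 < n → ∀ t, 0 < t → R t ≤ Su n t := by
    intro n hn t ht
    have hFt := hFpos t ht
    have hGt := hGpos t ht
    have hsu : Su n t = (∑ i ∈ Finset.range n,
        (F (t * (((i:ℝ)+1)/n)) - F (t * ((i:ℝ)/n))) * G (t * (1 - (i:ℝ)/n))) / (F t * G t) := by
      rw [hSudef]
      simp only
      rw [Finset.sum_div]
      refine Finset.sum_congr rfl fun i _ => ?_
      field_simp
    rw [hsu, hRdef]
    exact (div_le_div_iff_of_pos_right (mul_pos hFt hGt)).mpr (hup t ht n hn)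
  have hRge : ∀ n : ℕ, 0 < n → ∀ t, 0 < t → Sl n t ≤ R t := by
    intro n hn t ht
    have hFt := hFpos t ht
    have hGt := hGpos t ht
    have hsl : Sl n t = (∑ i ∈ Finset.range n,
        (F (t * (((i:ℝ)+1)/n)) - F (t * ((i:ℝ)/n))) * G (t * (1 - ((i:ℝ)+1)/n))) / (F t * G t) := by
      rw [hSldef]
      simp only
      rw [Finset.sum_div]
      refine Finset.sum_congr rfl fun i _ => ?_
      field_simp
    rw [hsl, hRdef]
    exact (div_le_div_iff_of_pos_right (mul_pos hFt hGt)).mpr (hlow t ht n hn)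
  set c : ℝ := ((1/2:ℝ) ^ α₁ * (1/2:ℝ) ^ α₂) / 2 with hcdef
  have hc : 0 < c := by
    have h1 : (0:ℝ) < (1/2:ℝ) ^ α₁ := Real.rpow_pos_of_pos (by norm_num) _
    have h2 : (0:ℝ) < (1/2:ℝ) ^ α₂ := Real.rpow_pos_of_pos (by norm_num) _
    rw [hcdef]; positivity
  have hRlow : ∀ᶠ t in nhdsWithin (0:ℝ) (Set.Ioi 0), c ≤ R t := by
    have hφ : Tendsto (fun t => (F (t*(1/2)) / F t) * (G (t*(1/2)) / G t))
        (nhdsWithin 0 (Set.Ioi 0)) (nhds ((1/2:ℝ) ^ α₁ * (1/2:ℝ) ^ α₂)) :=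
      (hF _ (by norm_num)).mul (hG _ (by norm_num))
    have hclt : c < (1/2:ℝ) ^ α₁ * (1/2:ℝ) ^ α₂ := by
      have h1 : (0:ℝ) < (1/2:ℝ) ^ α₁ := Real.rpow_pos_of_pos (by norm_num) _
      have h2 : (0:ℝ) < (1/2:ℝ) ^ α₂ := Real.rpow_pos_of_pos (by norm_num) _
      rw [hcdef]; nlinarith
    have hev := hφ.eventually_const_lt hclt
    filter_upwards [hev, self_mem_nhdsWithin] with t h1 h2
    have hFt := hFpos t h2
    have hGt := hGpos t h2
    have heq : (F (t*(1/2)) / F t) * (G (t*(1/2)) / G t)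
        = (F (t*(1/2)) * G (t*(1/2))) / (F t * G t) := by
      field_simp
    have hle : (F (t*(1/2)) * G (t*(1/2))) / (F t * G t) ≤ R t := by
      rw [hRdef]
      exact (div_le_div_iff_of_pos_right (mul_pos hFt hGt)).mpr (hlow2 t h2)
    rw [heq] at h1
    linarith
  have happrox : ∀ κ : ℝ, 0 < κ → ∃ n : ℕ, 0 < n ∧ u n - l n ≤ κ := by
    intro κ hκ
    have hcont : ContinuousOn (fun y : ℝ => y ^ α₂) (Set.Icc 0 1) := fun y _ =>
      (Real.continuousAt_rpow_const y α₂ (Or.inr hα₂.le)).continuousWithinAt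
    have huc := isCompact_Icc.uniformContinuousOn_of_continuous hcont
    rw [Metric.uniformContinuousOn_iff] at huc
    obtain ⟨δ, hδ, hδ'⟩ := huc κ hκ
    obtain ⟨n, hn⟩ := exists_nat_one_div_lt hδ
    refine ⟨n+1, Nat.succ_pos n, ?_⟩
    set m := n + 1 with hmdef
    have hm0 : 0 < m := Nat.succ_pos n
    have hm : (0:ℝ) < m := by exact_mod_cast hm0
    have key : u m - l m = ∑ i ∈ Finset.range m,
        ((((i:ℝ)+1)/m) ^ α₁ - ((i:ℝ)/m) ^ α₁)
          * ((1 - (i:ℝ)/m) ^ α₂ - (1 - ((i:ℝ)+1)/m) ^ α₂) := by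
      rw [hudef, hldef, ← Finset.sum_sub_distrib]
      exact Finset.sum_congr rfl fun i _ => by ring
    have tele : ∑ i ∈ Finset.range m, ((((i:ℝ)+1)/m) ^ α₁ - ((i:ℝ)/m) ^ α₁) = 1 := by
      have h := Finset.sum_range_sub (f := fun i : ℕ => (((i:ℝ))/m) ^ α₁) m
      have heq : ∀ i ∈ Finset.range m, ((((i:ℝ)+1)/m) ^ α₁ - ((i:ℝ)/m) ^ α₁)
          = ((((i+1:ℕ):ℝ))/m) ^ α₁ - (((i:ℕ):ℝ)/m) ^ α₁ := by
        intro i _; push_cast; ring_nf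
      rw [Finset.sum_congr rfl heq, h, div_self (ne_of_gt hm), Real.one_rpow]
      norm_num [Real.zero_rpow (ne_of_gt hα₁)]
    have bound : ∀ i ∈ Finset.range m,
        ((((i:ℝ)+1)/m) ^ α₁ - ((i:ℝ)/m) ^ α₁)
          * ((1 - (i:ℝ)/m) ^ α₂ - (1 - ((i:ℝ)+1)/m) ^ α₂)
        ≤ ((((i:ℝ)+1)/m) ^ α₁ - ((i:ℝ)/m) ^ α₁) * κ := by
      intro i hi
      have hin : (i:ℝ) + 1 ≤ m := by
        have := Finset.mem_range.mp hi
        exact_mod_cast Nat.succ_le_of_lt this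
      have hΔ : (0:ℝ) ≤ (((i:ℝ)+1)/m) ^ α₁ - ((i:ℝ)/m) ^ α₁ := by
        rw [sub_nonneg]
        exact Real.rpow_le_rpow (by positivity) (by gcongr; linarith) hα₁.le
      refine mul_le_mul_of_nonneg_left ?_ hΔ
      have hmem1 : (1 - (i:ℝ)/m) ∈ Set.Icc (0:ℝ) 1 := by
        constructor
        · rw [sub_nonneg]; rw [div_le_one hm]; linarith
        · have : (0:ℝ) ≤ (i:ℝ)/m := by positivity
          linarith
      have hmem2 : (1 - ((i:ℝ)+1)/m) ∈ Set.Icc (0:ℝ) 1 := by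
        constructor
        · rw [sub_nonneg]; rw [div_le_one hm]; linarith
        · have : (0:ℝ) ≤ ((i:ℝ)+1)/m := by positivity
          linarith
      have hdist : dist (1 - (i:ℝ)/m) (1 - ((i:ℝ)+1)/m) < δ := by
        rw [Real.dist_eq]
        have : (1 - (i:ℝ)/m) - (1 - ((i:ℝ)+1)/m) = 1/m := by field_simp; ring
        rw [this, abs_of_pos (by positivity)]
        calc (1:ℝ)/m = 1/((n:ℝ)+1) := by rw [hmdef]; push_cast; ring
        _ < δ := hn
      have := hδ' _ hmem1 _ hmem2 hdist
      rw [Real.dist_eq] at this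
      have habs := le_abs_self ((1 - (i:ℝ)/m) ^ α₂ - (1 - ((i:ℝ)+1)/m) ^ α₂)
      linarith
    calc u m - l m = _ := key
    _ ≤ ∑ i ∈ Finset.range m, ((((i:ℝ)+1)/m) ^ α₁ - ((i:ℝ)/m) ^ α₁) * κ :=
        Finset.sum_le_sum bound
    _ = (∑ i ∈ Finset.range m, ((((i:ℝ)+1)/m) ^ α₁ - ((i:ℝ)/m) ^ α₁)) * κ := by
        rw [Finset.sum_mul]
    _ = κ := by rw [tele, one_mul]
  have hR1 : ∀ x : ℝ, 0 < x → Tendsto (fun t => R (t*x) / R t)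
      (nhdsWithin 0 (Set.Ioi 0)) (nhds 1) := by
    intro x hx
    rw [Metric.tendsto_nhds]
    intro ε hε
    have hκpos : 0 < min (c*ε/8) 1 := lt_min (by positivity) one_pos
    set κ := min (c*ε/8) 1 with hκdef
    have hκc : κ ≤ c*ε/8 := min_le_left _ _
    obtain ⟨n, hn, hun⟩ := happrox κ hκpos
    have hxmap := tendsto_mul_pos_nhdsWithin hx
    have E1 : ∀ᶠ t in nhdsWithin (0:ℝ) (Set.Ioi 0), Su n t < u n + κ :=
      (hSu n hn).eventually_lt_const (lt_add_of_pos_right _ hκpos)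
    have E2 : ∀ᶠ t in nhdsWithin (0:ℝ) (Set.Ioi 0), l n - κ < Sl n t :=
      (hSl n hn).eventually_const_lt (by linarith)
    have Eall : ∀ᶠ t in nhdsWithin (0:ℝ) (Set.Ioi 0),
        (Su n t < u n + κ ∧ l n - κ < Sl n t) ∧ c ≤ R t ∧ 0 < t :=
      (E1.and E2).and (hRlow.and self_mem_nhdsWithin)
    have EallX := hxmap.eventually Eall
    filter_upwards [Eall, EallX] with t ht htx
    obtain ⟨⟨h1, h2⟩, h3, h4⟩ := ht
    obtain ⟨⟨h5, h6⟩, h7, h8⟩ := htx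
    have b1 : R t < l n + 2*κ := by
      have := hRle n hn t h4; linarith
    have b2 : l n - κ < R t := lt_of_lt_of_le h2 (hRge n hn t h4)
    have b3 : R (t*x) < l n + 2*κ := by
      have := hRle n hn (t*x) h8; linarith
    have b4 : l n - κ < R (t*x) := lt_of_lt_of_le h6 (hRge n hn (t*x) h8)
    have hRt : 0 < R t := lt_of_lt_of_le hc h3
    rw [Real.dist_eq]
    have heq : R (t*x) / R t - 1 = (R (t*x) - R t) / R t := by
      field_simp
    rw [heq, abs_div, abs_of_pos hRt]
    have habs : |R (t*x) - R t| ≤ 3*κ := abs_le.mpr ⟨by linarith, by linarith⟩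
    calc |R (t*x) - R t| / R t ≤ (3*κ) / R t := by gcongr
    _ ≤ (3*κ) / c := by
        apply div_le_div_of_nonneg_left _ hc h3
        positivity
    _ ≤ (3*(c*ε/8)) / c := by gcongr
    _ = 3*ε/8 := by field_simp
    _ < ε := by linarith
  intro x hx
  have hxmap := tendsto_mul_pos_nhdsWithin hx
  have heq : ∀ᶠ t in nhdsWithin (0:ℝ) (Set.Ioi 0),
      (R (t*x) / R t) * ((F (t*x) / F t) * (G (t*x) / G t)) = H (t*x) / H t := by
    filter_upwards [self_mem_nhdsWithin] with t ht
    have htx : (0:ℝ) < t*x := mul_pos ht hx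
    have h1 := hFpos t ht
    have h2 := hGpos t ht
    have h3 := hFpos _ htx
    have h4 := hGpos _ htx
    have h5 := hHpos t ht
    rw [hRdef]
    field_simp
  have hfinal := ((hR1 x hx).mul ((hF x hx).mul (hG x hx))).congr' heq
  have : (1:ℝ) * (x ^ α₁ * x ^ α₂) = x ^ (α₁ + α₂) := by
    rw [one_mul, ← Real.rpow_add hx]
  rwa [this] at hfinal

-- eventual lower bound for log(1+u)
private lemma log_one_add_ge {ε : ℝ} (hε : 0 < ε) :
    ∀ᶠ u in nhdsWithin (0:ℝ) (Set.Ioi 0), (1-ε) * u ≤ Real.log (1+u) := by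
  have h₁ : HasDerivAt (fun u : ℝ => 1+u) 1 0 := by
    simpa using (hasDerivAt_id (0:ℝ)).const_add 1
  have h₂ : HasDerivAt Real.log 1 ((fun u : ℝ => 1+u) 0) := by
    simpa using Real.hasDerivAt_log one_ne_zero
  have h₃ : HasDerivAt (fun u : ℝ => Real.log (1+u)) 1 0 := by
    simpa [Function.comp_def] using h₂.comp 0 h₁
  rw [hasDerivAt_iff_tendsto_slope] at h₃
  have h₄ : Tendsto (slope (fun u : ℝ => Real.log (1+u)) 0)
      (nhdsWithin 0 (Set.Ioi 0)) (nhds 1) :=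
    h₃.mono_left (nhdsWithin_mono 0 (fun y hy => ne_of_gt hy))
  have h₅ := h₄.eventually_const_lt (show 1-ε < 1 by linarith)
  filter_upwards [h₅, self_mem_nhdsWithin] with u h1 h2
  rw [slope_def_field] at h1
  simp only [add_zero, Real.log_one, sub_zero] at h1
  exact ((lt_div_iff₀ h2).mp h1).le

private lemma transfer {H : ℝ → ℝ} {β : ℝ} (hmono : Monotone H) (hpos : ∀ t, 0 < t → 0 < H t)
    (hH : ∀ x : ℝ, 0 < x → Tendsto (fun t => H (t*x) / H t)
      (nhdsWithin 0 (Set.Ioi 0)) (nhds (x ^ β))) :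
    ∀ x : ℝ, 0 < x → Tendsto (fun t => H (Real.log (1+t*x)) / H (Real.log (1+t)))
      (nhdsWithin 0 (Set.Ioi 0)) (nhds (x ^ β)) := by
  intro x hx
  rw [Metric.tendsto_nhds]
  intro ε' hε'
  -- continuity of c ↦ (x*c)^β at 1
  have hcont : ContinuousAt (fun c : ℝ => (x*c) ^ β) 1 := by
    have h1 : ContinuousAt (fun y : ℝ => y ^ β) (x*1) :=
      Real.continuousAt_rpow_const _ _ (Or.inl (by nlinarith))
    exact h1.comp ((continuous_const.mul continuous_id).continuousAt)
  rw [Metric.continuousAt_iff] at hcont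
  obtain ⟨δ, hδ, hδ'⟩ := hcont (ε'/2) (by linarith)
  set ε : ℝ := min (δ/3) (1/2) with hεdef
  have hε0 : 0 < ε := lt_min (by linarith) (by norm_num)
  have hε1 : ε ≤ 1/2 := min_le_right _ _
  have hεδ : ε ≤ δ/3 := min_le_left _ _
  have h1ε : 0 < 1 - ε := by linarith
  -- bounds on the limits
  have hub : ((x*(1/(1-ε))) ^ β) < x ^ β + ε'/2 := by
    have hd : dist (1/(1-ε)) 1 < δ := by
      rw [Real.dist_eq]
      have : (1:ℝ)/(1-ε) - 1 = ε/(1-ε) := by field_simp; ring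
      rw [this, abs_of_pos (by positivity)]
      rw [div_lt_iff₀ h1ε]
      nlinarith
    have := hδ' hd
    rw [Real.dist_eq, mul_one] at this
    have h := le_abs_self ((x*(1/(1-ε))) ^ β - x ^ β)
    linarith
  have hlb : x ^ β - ε'/2 < ((x*(1-ε)) ^ β) := by
    have hd : dist (1-ε) 1 < δ := by
      rw [Real.dist_eq]
      have : (1:ℝ)-ε - 1 = -ε := by ring
      rw [this, abs_neg, abs_of_pos hε0]
      linarith
    have := hδ' hd
    rw [Real.dist_eq, mul_one] at this
    have h := neg_abs_le ((x*(1-ε)) ^ β - x ^ β)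
    linarith
  -- the two bounding functions and their limits
  have hxmap := tendsto_mul_pos_nhdsWithin hx
  have hemap := tendsto_mul_pos_nhdsWithin h1ε
  have hBu : Tendsto (fun t => H (t*x) / H (t*(1-ε))) (nhdsWithin 0 (Set.Ioi 0))
      (nhds ((x*(1/(1-ε))) ^ β)) := by
    have hcomp := (hH (x*(1/(1-ε))) (by positivity)).comp hemap
    have : (fun t => H (t*(1-ε)*(x*(1/(1-ε)))) / H (t*(1-ε)))
        = fun t => H (t*x) / H (t*(1-ε)) := by
      funext t
      congr 2
      field_simp
    rwa [Function.comp_def, this] at hcomp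
  have hBl : Tendsto (fun t => H (t*((1-ε)*x)) / H t) (nhdsWithin 0 (Set.Ioi 0))
      (nhds ((x*(1-ε)) ^ β)) := by
    have h := hH ((1-ε)*x) (by positivity)
    rwa [show ((1-ε)*x) ^ β = (x*(1-ε)) ^ β by rw [mul_comm]] at h
  have EBu := hBu.eventually_lt_const hub
  have EBl := hBl.eventually_const_lt hlb
  -- log inequalities
  have Elog1 := log_one_add_ge hε0
  have Elog2 := hxmap.eventually (log_one_add_ge hε0)
  filter_upwards [EBu, EBl, Elog1, Elog2, self_mem_nhdsWithin] with t hBu' hBl' hl1 hl2 ht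
  have htpos : (0:ℝ) < t := ht
  have htx : (0:ℝ) < t*x := mul_pos htpos hx
  -- log(1+s) ≤ s
  have hup1 : Real.log (1+t) ≤ t := by
    have := Real.log_le_sub_one_of_pos (show (0:ℝ) < 1+t by linarith)
    linarith
  have hup2 : Real.log (1+t*x) ≤ t*x := by
    have := Real.log_le_sub_one_of_pos (show (0:ℝ) < 1+t*x by linarith)
    linarith
  have hlogpos1 : 0 < Real.log (1+t) := Real.log_pos (by linarith)
  have hlogpos2 : 0 < Real.log (1+t*x) := Real.log_pos (by nlinarith)
  -- sandwich
  have hub' : H (Real.log (1+t*x)) / H (Real.log (1+t)) ≤ H (t*x) / H (t*(1-ε)) := by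
    apply div_le_div₀ (le_of_lt (hpos _ htx)) (hmono hup2) (hpos _ (by positivity))
    calc H (t*(1-ε)) = H ((1-ε)*t) := by rw [mul_comm]
    _ ≤ H (Real.log (1+t)) := hmono hl1
  have hlb' : H (t*((1-ε)*x)) / H t ≤ H (Real.log (1+t*x)) / H (Real.log (1+t)) := by
    apply div_le_div₀ (le_of_lt (hpos _ hlogpos2)) _ (hpos _ hlogpos1) (hmono hup1)
    calc H (t*((1-ε)*x)) = H ((1-ε)*(t*x)) := by ring_nf
    _ ≤ H (Real.log (1+t*x)) := hmono hl2
  rw [Real.dist_eq, abs_lt]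
  constructor
  · have : x ^ β - ε'/2 < H (Real.log (1+t*x)) / H (Real.log (1+t)) := lt_of_lt_of_le hBl' hlb'
    linarith
  · have : H (Real.log (1+t*x)) / H (Real.log (1+t)) < x ^ β + ε'/2 := lt_of_le_of_lt hub' hBu'
    linarith

end Aux

/-- if `X, Y ≥ 1` are independent with `ln X ∈ RV⁰_{α₁}` and
`ln Y ∈ RV⁰_{α₂}`, then `XY − 1 ∈ RV⁰_{α₁+α₂}`. -/
theorem regVarZero_mul_sub_one {Ω : Type*} [MeasurableSpace Ω] (μ : Measure Ω)
    [IsProbabilityMeasure μ] (X Y : Ω → ℝ)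
    (hXm : Measurable X) (hYm : Measurable Y)
    (hX1 : ∀ ω, 1 ≤ X ω) (hY1 : ∀ ω, 1 ≤ Y ω)
    (hindep : IndepFun X Y μ) (α₁ α₂ : ℝ) (hα₁ : 0 < α₁) (hα₂ : 0 < α₂)
    (hX : RegVarZero μ (fun ω => Real.log (X ω)) α₁)
    (hY : RegVarZero μ (fun ω => Real.log (Y ω)) α₂) :
    RegVarZero μ (fun ω => X ω * Y ω - 1) (α₁ + α₂) := by
  have hAm : Measurable (fun ω => Real.log (X ω)) := hXm.log
  have hBm : Measurable (fun ω => Real.log (Y ω)) := hYm.log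
  set A : Ω → ℝ := fun ω => Real.log (X ω) with hAdef
  set B : Ω → ℝ := fun ω => Real.log (Y ω) with hBdef
  have hAnn : ∀ ω, 0 ≤ A ω := fun ω => Real.log_nonneg (hX1 ω)
  have hBnn : ∀ ω, 0 ≤ B ω := fun ω => Real.log_nonneg (hY1 ω)
  have hindep' : IndepFun A B μ := hindep.comp Real.measurable_log Real.measurable_log
  set F : ℝ → ℝ := fun t => (μ {ω | A ω ≤ t}).toReal with hFdef
  set G : ℝ → ℝ := fun t => (μ {ω | B ω ≤ t}).toReal with hGdef
  set H : ℝ → ℝ := fun t => (μ {ω | A ω + B ω ≤ t}).toReal with hHdef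
  have hF : ∀ x : ℝ, 0 < x → Tendsto (fun t => F (t*x) / F t)
      (nhdsWithin 0 (Set.Ioi 0)) (nhds (x ^ α₁)) := hX
  have hG : ∀ x : ℝ, 0 < x → Tendsto (fun t => G (t*x) / G t)
      (nhdsWithin 0 (Set.Ioi 0)) (nhds (x ^ α₂)) := hY
  have hFmono : Monotone F := fun a b hab =>
    ENNReal.toReal_mono (measure_ne_top μ _) (measure_mono (fun ω h => le_trans h hab))
  have hGmono : Monotone G := fun a b hab =>
    ENNReal.toReal_mono (measure_ne_top μ _) (measure_mono (fun ω h => le_trans h hab))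
  have hHmono : Monotone H := fun a b hab =>
    ENNReal.toReal_mono (measure_ne_top μ _) (measure_mono (fun ω h => le_trans h hab))
  have hFnn : ∀ t, 0 ≤ F t := fun t => ENNReal.toReal_nonneg
  have hGnn : ∀ t, 0 ≤ G t := fun t => ENNReal.toReal_nonneg
  have hHnn : ∀ t, 0 ≤ H t := fun t => ENNReal.toReal_nonneg
  obtain ⟨-, hF0, hFpos⟩ := rv_zero_facts hα₁ hFmono hFnn hF
  -- independence product rule
  have hkey : ∀ a b : ℝ, μ ({ω | A ω ≤ a} ∩ {ω | B ω ≤ b})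
      = μ {ω | A ω ≤ a} * μ {ω | B ω ≤ b} := by
    intro a b
    exact hindep'.measure_inter_preimage_eq_mul (Set.Iic a) (Set.Iic b)
      measurableSet_Iic measurableSet_Iic
  have hprod : ∀ a b : ℝ, (μ ({ω | A ω ≤ a} ∩ {ω | B ω ≤ b})).toReal = F a * G b := by
    intro a b
    rw [hkey, ENNReal.toReal_mul]
  have hboxmeas : ∀ a a' b : ℝ, MeasurableSet {ω | a < A ω ∧ A ω ≤ a' ∧ B ω ≤ b} := by
    intro a a' b
    have : {ω | a < A ω ∧ A ω ≤ a' ∧ B ω ≤ b}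
        = (A ⁻¹' (Set.Ioc a a')) ∩ (B ⁻¹' (Set.Iic b)) := by
      ext ω
      simp [Set.mem_Ioc, and_assoc]
    rw [this]
    exact (hAm measurableSet_Ioc).inter (hBm measurableSet_Iic)
  have hbox : ∀ a a' b : ℝ, a ≤ a' →
      (μ {ω | a < A ω ∧ A ω ≤ a' ∧ B ω ≤ b}).toReal = (F a' - F a) * G b := by
    intro a a' b hab
    have hset : {ω | a < A ω ∧ A ω ≤ a' ∧ B ω ≤ b}
        = ({ω | A ω ≤ a'} ∩ {ω | B ω ≤ b}) \ ({ω | A ω ≤ a} ∩ {ω | B ω ≤ b}) := by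
      ext ω
      simp only [Set.mem_setOf_eq, Set.mem_diff, Set.mem_inter_iff]
      constructor
      · rintro ⟨h1, h2, h3⟩
        exact ⟨⟨h2, h3⟩, fun h => absurd h.1 (not_le.mpr h1)⟩
      · rintro ⟨⟨h2, h3⟩, h4⟩
        refine ⟨?_, h2, h3⟩
        by_contra h
        exact h4 ⟨not_lt.mp h, h3⟩
    have hsub : ({ω | A ω ≤ a} ∩ {ω | B ω ≤ b}) ⊆ ({ω | A ω ≤ a'} ∩ {ω | B ω ≤ b}) :=
      Set.inter_subset_inter_left _ (fun ω h => le_trans h hab)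
    have hm2 : MeasurableSet ({ω | A ω ≤ a} ∩ {ω | B ω ≤ b}) :=
      (hAm measurableSet_Iic).inter (hBm measurableSet_Iic)
    rw [hset, measure_diff hsub hm2.nullMeasurableSet (measure_ne_top μ _),
      ENNReal.toReal_sub_of_le (measure_mono hsub) (measure_ne_top μ _),
      hprod, hprod]
    ring
  -- μ {A ≤ 0} = 0
  have hA0 : μ {ω | A ω ≤ 0} = 0 := by
    have h1 : F 0 = 0 := hF0
    rw [hFdef] at h1
    simp only at h1
    rcases (ENNReal.toReal_eq_zero_iff _).mp h1 with h | h
    · exact h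
    · exact absurd h (measure_ne_top μ _)
  -- lower bound via halves
  have hlow2 : ∀ t, 0 < t → F (t * (1/2)) * G (t * (1/2)) ≤ H t := by
    intro t ht
    rw [← hprod]
    apply ENNReal.toReal_mono (measure_ne_top μ _)
    apply measure_mono
    rintro ω ⟨h1, h2⟩
    simp only [Set.mem_setOf_eq] at h1 h2 ⊢
    linarith
  have hup : ∀ t, 0 < t → ∀ n : ℕ, 0 < n →
      H t ≤ ∑ i ∈ Finset.range n,
        (F (t * (((i:ℝ)+1)/n)) - F (t * ((i:ℝ)/n))) * G (t * (1 - (i:ℝ)/n)) := by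
    intro t ht n hn
    have hn' : (0:ℝ) < n := by exact_mod_cast hn
    set U : ℕ → Set Ω := fun i => {ω | t * ((i:ℝ)/n) < A ω ∧ A ω ≤ t * (((i:ℝ)+1)/n)
      ∧ B ω ≤ t * (1 - (i:ℝ)/n)} with hUdef
    have hcover : {ω | A ω + B ω ≤ t} ⊆ {ω | A ω ≤ 0} ∪ ⋃ i ∈ Finset.range n, U i := by
      intro ω hω
      simp only [Set.mem_setOf_eq] at hω
      by_cases h0 : A ω ≤ 0
      · exact Or.inl h0
      · push_neg at h0
        right
        have hAt : A ω ≤ t := by have := hBnn ω; linarith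
        set k := ⌈A ω * n / t⌉₊ with hkdef
        have hk1 : 1 ≤ k := Nat.one_le_ceil_iff.mpr (by positivity)
        have hkn : k ≤ n := Nat.ceil_le.mpr (by rw [div_le_iff₀ ht]; nlinarith)
        have hmem : k - 1 ∈ Finset.range n := Finset.mem_range.mpr (by omega)
        refine Set.mem_biUnion hmem ?_
        have hcast : ((k-1:ℕ):ℝ) + 1 = (k:ℝ) := by
          have h1 : (1:ℕ) ≤ k := hk1
          push_cast [Nat.cast_sub h1]
          ring
        have hle : A ω * n / t ≤ (k:ℝ) := Nat.le_ceil _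
        have hlt : ((k-1:ℕ):ℝ) < A ω * n / t := Nat.lt_ceil.mp (by omega)
        have c1 : t * (((k-1:ℕ):ℝ)/n) < A ω := by
          have h2 : ((k-1:ℕ):ℝ) * t < A ω * n := (lt_div_iff₀ ht).mp hlt
          rw [mul_div_assoc'] at *
          rw [show t * ((k-1:ℕ):ℝ) / n = ((k-1:ℕ):ℝ) * t / n by ring]
          exact (div_lt_iff₀ hn').mpr (by nlinarith)
        have c2 : A ω ≤ t * ((((k-1:ℕ):ℝ)+1)/n) := by
          rw [hcast]
          have h2 : A ω * n ≤ (k:ℝ) * t := (div_le_iff₀ ht).mp hle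
          rw [show t * ((k:ℝ)/n) = (k:ℝ) * t / n by ring]
          exact (le_div_iff₀ hn').mpr (by nlinarith)
        have c3 : B ω ≤ t * (1 - ((k-1:ℕ):ℝ)/n) := by
          have hexp : t * (1 - ((k-1:ℕ):ℝ)/n) = t - t * (((k-1:ℕ):ℝ)/n) := by ring
          rw [hexp]
          linarith
        exact ⟨c1, c2, c3⟩
    calc H t ≤ (μ ({ω | A ω ≤ 0} ∪ ⋃ i ∈ Finset.range n, U i)).toReal :=
        ENNReal.toReal_mono (measure_ne_top μ _) (measure_mono hcover)
    _ ≤ (μ {ω | A ω ≤ 0} + μ (⋃ i ∈ Finset.range n, U i)).toReal := by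
        apply ENNReal.toReal_mono
        · exact ENNReal.add_ne_top.mpr ⟨measure_ne_top μ _, measure_ne_top μ _⟩
        · exact measure_union_le _ _
    _ = (μ (⋃ i ∈ Finset.range n, U i)).toReal := by rw [hA0, zero_add]
    _ ≤ (∑ i ∈ Finset.range n, μ (U i)).toReal := by
        apply ENNReal.toReal_mono
        · exact (ENNReal.sum_lt_top.mpr (fun i _ => measure_lt_top μ _)).ne
        · exact measure_biUnion_finset_le _ _
    _ = ∑ i ∈ Finset.range n, (μ (U i)).toReal :=
        ENNReal.toReal_sum (fun i _ => measure_ne_top μ _)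
    _ = ∑ i ∈ Finset.range n,
        (F (t * (((i:ℝ)+1)/n)) - F (t * ((i:ℝ)/n))) * G (t * (1 - (i:ℝ)/n)) := by
        refine Finset.sum_congr rfl fun i hi => ?_
        apply hbox
        apply mul_le_mul_of_nonneg_left _ ht.le
        exact (div_le_div_iff_of_pos_right hn').mpr (by linarith)
  have hlow : ∀ t, 0 < t → ∀ n : ℕ, 0 < n →
      ∑ i ∈ Finset.range n,
        (F (t * (((i:ℝ)+1)/n)) - F (t * ((i:ℝ)/n))) * G (t * (1 - ((i:ℝ)+1)/n)) ≤ H t := by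
    intro t ht n hn
    have hn' : (0:ℝ) < n := by exact_mod_cast hn
    set D : ℕ → Set Ω := fun i => {ω | t * ((i:ℝ)/n) < A ω ∧ A ω ≤ t * (((i:ℝ)+1)/n)
      ∧ B ω ≤ t * (1 - ((i:ℝ)+1)/n)} with hDdef
    have hmeasD : ∀ i ∈ Finset.range n, MeasurableSet (D i) := fun i _ => hboxmeas _ _ _
    have hdisj : Set.PairwiseDisjoint ↑(Finset.range n) D := by
      have key : ∀ i j : ℕ, i < j → Disjoint (D i) (D j) := by
        intro i j hij'
        rw [Set.disjoint_left]
        rintro ω ⟨-, h2, -⟩ ⟨h4, -, -⟩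
        have hij2 : (i:ℝ) + 1 ≤ (j:ℝ) := by exact_mod_cast hij'
        have hmm : t * (((i:ℝ)+1)/n) ≤ t * ((j:ℝ)/n) := by
          apply mul_le_mul_of_nonneg_left _ ht.le
          exact (div_le_div_iff_of_pos_right hn').mpr hij2
        linarith
      intro i hi j hj hij
      rcases lt_or_gt_of_ne hij with h | h
      · exact key i j h
      · exact (key j i h).symm
    have hsub : (⋃ i ∈ Finset.range n, D i) ⊆ {ω | A ω + B ω ≤ t} := by
      intro ω hω
      simp only [Set.mem_iUnion, Set.mem_setOf_eq] at hω
      obtain ⟨i, hi, h1, h2, h3⟩ := hω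
      simp only [Set.mem_setOf_eq]
      have hexp : t * (((i:ℝ)+1)/n) + t * (1 - ((i:ℝ)+1)/n) = t := by ring
      linarith
    calc ∑ i ∈ Finset.range n,
        (F (t * (((i:ℝ)+1)/n)) - F (t * ((i:ℝ)/n))) * G (t * (1 - ((i:ℝ)+1)/n))
        = ∑ i ∈ Finset.range n, (μ (D i)).toReal := by
          refine Finset.sum_congr rfl fun i hi => ?_
          refine (hbox _ _ _ ?_).symm
          apply mul_le_mul_of_nonneg_left _ ht.le
          exact (div_le_div_iff_of_pos_right hn').mpr (by linarith)
    _ = (∑ i ∈ Finset.range n, μ (D i)).toReal :=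
        (ENNReal.toReal_sum (fun i _ => measure_ne_top μ _)).symm
    _ = (μ (⋃ i ∈ Finset.range n, D i)).toReal := by rw [measure_biUnion_finset hdisj hmeasD]
    _ ≤ H t := ENNReal.toReal_mono (measure_ne_top μ _) (measure_mono hsub)
  obtain ⟨-, -, hGpos⟩ := rv_zero_facts hα₂ hGmono hGnn hG
  have hHpos : ∀ t, 0 < t → 0 < H t := by
    intro t ht
    exact lt_of_lt_of_le
      (mul_pos (hFpos _ (by linarith)) (hGpos _ (by linarith))) (hlow2 t ht)
  have hHrv := core hα₁ hα₂ hFmono hGmono hFnn hGnn hHnn hF hG hlow2 hup hlow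
  have htrans := transfer hHmono hHpos hHrv
  intro x hx
  refine (htrans x hx).congr' ?_
  have hset : ∀ s : ℝ, 0 < s →
      {ω | X ω * Y ω - 1 ≤ s} = {ω | A ω + B ω ≤ Real.log (1+s)} := by
    intro s hs
    ext ω
    simp only [Set.mem_setOf_eq]
    have hXp : (0:ℝ) < X ω := lt_of_lt_of_le one_pos (hX1 ω)
    have hYp : (0:ℝ) < Y ω := lt_of_lt_of_le one_pos (hY1 ω)
    have hlogmul : Real.log (X ω * Y ω) = A ω + B ω :=
      Real.log_mul (ne_of_gt hXp) (ne_of_gt hYp)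
    rw [← hlogmul, Real.log_le_log_iff (mul_pos hXp hYp) (by linarith)]
    constructor
    · intro h; linarith
    · intro h; linarith
  filter_upwards [self_mem_nhdsWithin] with t ht
  have h1 := hset t ht
  have h2 := hset (t*x) (mul_pos ht hx)
  rw [hHdef]
  simp only
  rw [← h1, ← h2]
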